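/- Let c = (c_1,…,c_k) be a composition of size n and let P_c be the associated poset on n+1 elements with minimum-chain element p_0. For 0 ≤ q ≤ 1, consider the slice S_q = { x ∈ ℝ^{P_c∖{p_0}} : 0 ≤ x_a ≤ x_b ≤ 1 whenever a ≤ b in P_c, where x_{p_0} is interpreted as the constant q } of the order polytope of P_c. Then the n-dimensional Lebesgue measure of S_q equals g_c(q) / ((c_1−1)!⋯(c_k−1)!). -/

import Mathlib

open MeasureTheory

/-- Iterated integral defining the composition polynomial, peeling off the
outermost variable first (so the list argument is the reversed composition). -/
noncomputable def gAux : List ℕ → ℝ → ℝ → ℝ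
  | [], _, _ => 1
  | a :: rest, q, u => ∫ t in q..u, t ^ (a - 1) * gAux rest q t

/-- The composition polynomial
`g_c(q) = ∫_q^1 ∫_q^{t_k} ⋯ ∫_q^{t_2} t_1^{c_1-1} ⋯ t_k^{c_k-1} dt_1 ⋯ dt_k`. -/
noncomputable def gcomp (c : List ℕ) (q : ℝ) : ℝ := gAux c.reverse q 1

/-- For the composition `c` with parts `c_i = d i + 1`, the elements of the
poset `P_c` other than `p_0` are the pairs `⟨i, r⟩` with `i : Fin k` and
`r : Fin (c_i)`: the element `⟨i, d i⟩` is `p_i`, and the elements `⟨i, r⟩`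
with `r < d i` form the extra chain of `c_i − 1` elements below `p_i`.
`posetLe d x y` is the order relation of `P_c` restricted to these elements:
`x ≤ y` iff they are in the same block and `x` is below `y` in its chain, or
`x` is in an earlier block than `y` and `y` is some `p_j`. -/
def posetLe {k : ℕ} (d : Fin k → ℕ) (x y : (i : Fin k) × Fin (d i + 1)) : Prop :=
  (x.1 = y.1 ∧ (x.2 : ℕ) ≤ (y.2 : ℕ)) ∨ (x.1 < y.1 ∧ (y.2 : ℕ) = d y.1)

lemma gAux_continuous (l : List ℕ) (q : ℝ) : Continuous (gAux l q) := by
  induction l with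
  | nil => simpa [gAux] using continuous_const
  | cons a rest ih =>
    have hc : Continuous fun t : ℝ => t ^ (a - 1) * gAux rest q t :=
      (continuous_pow _).mul ih
    have := intervalIntegral.continuous_primitive (μ := volume)
      (fun a₁ b₁ => hc.intervalIntegrable a₁ b₁) q
    simpa [gAux] using this

lemma gAux_nonneg (l : List ℕ) : ∀ q u : ℝ, 0 ≤ q → q ≤ u → 0 ≤ gAux l q u := by
  induction l with
  | nil => intro q u _ _; simp [gAux]
  | cons a rest ih =>
    intro q u hq hqu
    refine intervalIntegral.integral_nonneg hqu fun t ht => ?_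
    exact mul_nonneg (pow_nonneg (hq.trans ht.1) _) (ih q t hq ht.1)

lemma lintegral_Icc_ofReal {a b : ℝ} (hab : a ≤ b) {f : ℝ → ℝ}
    (hf : Continuous f) (hf0 : ∀ x ∈ Set.Icc a b, 0 ≤ f x) :
    ∫⁻ t in Set.Icc a b, ENNReal.ofReal (f t) = ENNReal.ofReal (∫ t in a..b, f t) := by
  rw [intervalIntegral.integral_of_le hab, ← MeasureTheory.integral_Icc_eq_integral_Ioc,
    ofReal_integral_eq_lintegral_ofReal hf.integrableOn_Icc
      ((ae_restrict_iff' measurableSet_Icc).2 (Filter.Eventually.of_forall hf0))]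

def simplexSet (m : ℕ) (t : ℝ) : Set (Fin m → ℝ) :=
  {y | (∀ r, 0 ≤ y r ∧ y r ≤ t) ∧ ∀ r s : Fin m, r ≤ s → y r ≤ y s}

lemma measurableSet_simplexSet (m : ℕ) (t : ℝ) : MeasurableSet (simplexSet m t) := by
  have h1 : MeasurableSet {y : Fin m → ℝ | ∀ r, 0 ≤ y r ∧ y r ≤ t} := by
    rw [Set.setOf_forall]
    refine .iInter fun r => ?_
    exact (measurableSet_le measurable_const (measurable_pi_apply r)).inter
      (measurableSet_le (measurable_pi_apply r) measurable_const)
  have h2 : MeasurableSet {y : Fin m → ℝ | ∀ r s : Fin m, r ≤ s → y r ≤ y s} := by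
    rw [Set.setOf_forall]
    refine .iInter fun r => ?_
    rw [Set.setOf_forall]
    refine .iInter fun s => ?_
    by_cases h : r ≤ s
    · simp only [h, forall_true_left]
      exact measurableSet_le (measurable_pi_apply r) (measurable_pi_apply s)
    · simp only [h, false_implies, Set.setOf_true]
      exact .univ
  exact h1.inter h2

lemma mem_simplexSet_succ_iff {m : ℕ} {t : ℝ} (y : Fin (m + 1) → ℝ) :
    y ∈ simplexSet (m + 1) t ↔
      ((0 ≤ y (Fin.last m) ∧ y (Fin.last m) ≤ t) ∧
        (fun r => y r.castSucc) ∈ simplexSet m (y (Fin.last m))) := by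
  constructor
  · rintro ⟨hb, hm⟩
    refine ⟨hb (Fin.last m), fun r => ⟨(hb _).1, hm _ _ (Fin.le_last _)⟩,
      fun r s hrs => hm _ _ (by simpa using hrs)⟩
  · rintro ⟨⟨h0, ht⟩, hz⟩
    constructor
    · intro r
      induction r using Fin.lastCases with
      | last => exact ⟨h0, ht⟩
      | cast j => exact ⟨(hz.1 j).1, (hz.1 j).2.trans ht⟩
    · intro r s hrs
      induction r using Fin.lastCases with
      | last =>
        have : s = Fin.last m := le_antisymm (Fin.le_last s) hrs
        simp [this]
      | cast j =>
        induction s using Fin.lastCases with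
        | last => exact (hz.1 j).2
        | cast j' => exact hz.2 j j' (by simpa using hrs)

lemma volume_simplexSet : ∀ (m : ℕ) (t : ℝ), 0 ≤ t →
    volume (simplexSet m t) = ENNReal.ofReal (t ^ m / m.factorial) := by
  intro m
  induction m with
  | zero =>
    intro t _
    have h : simplexSet 0 t = Set.univ := by
      ext y
      exact ⟨fun _ => trivial, fun _ => ⟨fun r => r.elim0, fun r => r.elim0⟩⟩
    rw [h, volume_pi, Measure.pi_univ]
    simp
  | succ m ih =>
    intro t ht
    set Φ := MeasurableEquiv.piFinSuccAbove (fun _ : Fin (m + 1) => ℝ) (Fin.last m) with hΦ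
    have hmp : MeasurePreserving Φ.symm volume volume :=
      (volume_preserving_piFinSuccAbove (fun _ : Fin (m + 1) => ℝ) (Fin.last m)).symm
    have hev1 : ∀ (s : ℝ) (z : Fin m → ℝ), Φ.symm (s, z) (Fin.last m) = s := by
      intro s z
      simp [hΦ, MeasurableEquiv.piFinSuccAbove]
    have hev2 : ∀ (s : ℝ) (z : Fin m → ℝ) (j : Fin m), Φ.symm (s, z) j.castSucc = z j := by
      intro s z j
      rw [← Fin.succAbove_last_apply j]
      simp [hΦ, MeasurableEquiv.piFinSuccAbove]
    have hset : Φ.symm ⁻¹' simplexSet (m + 1) t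
        = {p : ℝ × (Fin m → ℝ) | (0 ≤ p.1 ∧ p.1 ≤ t) ∧ p.2 ∈ simplexSet m p.1} := by
      ext ⟨s, z⟩
      simp only [Set.mem_preimage, Set.mem_setOf_eq, mem_simplexSet_succ_iff, hev1]
      constructor
      · rintro ⟨hb, hz⟩
        refine ⟨hb, ?_⟩
        convert hz using 2 with r
        exact (hev2 s z r).symm
      · rintro ⟨hb, hz⟩
        refine ⟨hb, ?_⟩
        convert hz using 2 with r
        exact hev2 s z r
    have hSmeas := measurableSet_simplexSet (m + 1) t
    calc volume (simplexSet (m + 1) t)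
        = (volume.prod volume) (Φ.symm ⁻¹' simplexSet (m + 1) t) :=
          (hmp.measure_preimage hSmeas.nullMeasurableSet).symm
      _ = ∫⁻ s : ℝ, volume (Prod.mk s ⁻¹' (Φ.symm ⁻¹' simplexSet (m + 1) t)) := by
          rw [Measure.prod_apply (Φ.symm.measurable hSmeas)]
      _ = ∫⁻ s : ℝ, (Set.Icc (0:ℝ) t).indicator
            (fun s => ENNReal.ofReal (s ^ m / m.factorial)) s := by
          refine lintegral_congr fun s => ?_
          rw [hset]
          by_cases hs : s ∈ Set.Icc (0:ℝ) t
          · have : Prod.mk s ⁻¹' {p : ℝ × (Fin m → ℝ) |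
                (0 ≤ p.1 ∧ p.1 ≤ t) ∧ p.2 ∈ simplexSet m p.1} = simplexSet m s := by
              ext z
              simp only [Set.mem_preimage, Set.mem_setOf_eq]
              exact ⟨fun h => h.2, fun h => ⟨⟨hs.1, hs.2⟩, h⟩⟩
            rw [this, Set.indicator_of_mem hs, ih s hs.1]
          · have : Prod.mk s ⁻¹' {p : ℝ × (Fin m → ℝ) |
                (0 ≤ p.1 ∧ p.1 ≤ t) ∧ p.2 ∈ simplexSet m p.1} = ∅ := by
              ext z
              simp only [Set.mem_preimage, Set.mem_setOf_eq, Set.mem_empty_iff_false, iff_false]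
              rintro ⟨⟨h1, h2⟩, -⟩
              exact hs ⟨h1, h2⟩
            rw [this, Set.indicator_of_notMem hs]
            simp
      _ = ∫⁻ s in Set.Icc (0:ℝ) t, ENNReal.ofReal (s ^ m / m.factorial) := by
          rw [lintegral_indicator measurableSet_Icc]
      _ = ENNReal.ofReal (∫ s in (0:ℝ)..t, s ^ m / m.factorial) := by
          refine lintegral_Icc_ofReal ht ((continuous_pow m).div_const _) fun x hx => ?_
          exact div_nonneg (pow_nonneg hx.1 _) (Nat.cast_nonneg _)
      _ = ENNReal.ofReal (t ^ (m + 1) / (m + 1).factorial) := by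
          rw [intervalIntegral.integral_div, integral_pow]
          congr 1
          have h1 : ((m : ℝ) + 1) ≠ 0 := by positivity
          have h2 : ((m.factorial : ℝ)) ≠ 0 := Nat.cast_ne_zero.2 m.factorial_ne_zero
          rw [Nat.factorial_succ]
          push_cast
          field_simp
          simp

def keySet {k : ℕ} (d : Fin k → ℕ) (q u : ℝ) : Set (((i : Fin k) × Fin (d i + 1)) → ℝ) :=
  {x | (∀ a, 0 ≤ x a) ∧ (∀ a b, posetLe d a b → x a ≤ x b) ∧
       (∀ i, q ≤ x ⟨i, Fin.last (d i)⟩) ∧ (∀ i, x ⟨i, Fin.last (d i)⟩ ≤ u)}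

lemma measurableSet_keySet {k : ℕ} (d : Fin k → ℕ) (q u : ℝ) :
    MeasurableSet (keySet d q u) := by
  have h1 : MeasurableSet {x : ((i : Fin k) × Fin (d i + 1)) → ℝ | ∀ a, 0 ≤ x a} := by
    rw [Set.setOf_forall]
    exact .iInter fun a => measurableSet_le measurable_const (measurable_pi_apply a)
  have h2 : MeasurableSet {x : ((i : Fin k) × Fin (d i + 1)) → ℝ |
      ∀ a b, posetLe d a b → x a ≤ x b} := by
    rw [Set.setOf_forall]
    refine .iInter fun a => ?_
    rw [Set.setOf_forall]
    refine .iInter fun b => ?_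
    by_cases h : posetLe d a b
    · simp only [h, forall_true_left]
      exact measurableSet_le (measurable_pi_apply a) (measurable_pi_apply b)
    · simp only [h, false_implies, Set.setOf_true]
      exact .univ
  have h3 : MeasurableSet {x : ((i : Fin k) × Fin (d i + 1)) → ℝ |
      ∀ i, q ≤ x ⟨i, Fin.last (d i)⟩} := by
    rw [Set.setOf_forall]
    exact .iInter fun i => measurableSet_le measurable_const (measurable_pi_apply _)
  have h4 : MeasurableSet {x : ((i : Fin k) × Fin (d i + 1)) → ℝ |
      ∀ i, x ⟨i, Fin.last (d i)⟩ ≤ u} := by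
    rw [Set.setOf_forall]
    exact .iInter fun i => measurableSet_le (measurable_pi_apply _) measurable_const
  exact h1.inter (h2.inter (h3.inter h4))

def blockEquiv {k : ℕ} (d : Fin (k + 1) → ℕ) :
    (Fin (d (Fin.last k) + 1) ⊕ ((j : Fin k) × Fin (d j.castSucc + 1)))
      ≃ ((i : Fin (k + 1)) × Fin (d i + 1)) where
  toFun := Sum.elim (fun r => ⟨Fin.last k, r⟩) (fun p => ⟨p.1.castSucc, p.2⟩)
  invFun p := Fin.lastCases (motive := fun i => Fin (d i + 1) →
      (Fin (d (Fin.last k) + 1) ⊕ ((j : Fin k) × Fin (d j.castSucc + 1))))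
    (fun r => Sum.inl r) (fun j r => Sum.inr ⟨j, r⟩) p.1 p.2
  left_inv := by
    rintro (r | ⟨j, r⟩)
    · simp
    · simp
  right_inv := by
    rintro ⟨i, r⟩
    induction i using Fin.lastCases with
    | last => simp
    | cast j => simp

lemma insert_last_eval_last {m : ℕ} (s : ℝ) (z : Fin m → ℝ) :
    (MeasurableEquiv.piFinSuccAbove (fun _ : Fin (m + 1) => ℝ) (Fin.last m)).symm
      (s, z) (Fin.last m) = s := by
  simp [MeasurableEquiv.piFinSuccAbove]

lemma insert_last_eval_castSucc {m : ℕ} (s : ℝ) (z : Fin m → ℝ) (j : Fin m) :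
    (MeasurableEquiv.piFinSuccAbove (fun _ : Fin (m + 1) => ℝ) (Fin.last m)).symm
      (s, z) j.castSucc = z j := by
  rw [← Fin.succAbove_last_apply j]
  simp [MeasurableEquiv.piFinSuccAbove]

lemma volume_keySet : ∀ (k : ℕ) (d : Fin k → ℕ) (q u : ℝ), 0 ≤ q → q ≤ u →
    volume (keySet d q u) =
      ENNReal.ofReal (gAux (List.ofFn fun i => d i + 1).reverse q u /
        ∏ i, (Nat.factorial (d i) : ℝ)) := by
  intro k
  induction k with
  | zero =>
    intro d q u hq hqu
    have h : keySet d q u = Set.univ := by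
      ext x
      exact ⟨fun _ => trivial,
        fun _ => ⟨fun a => a.1.elim0, fun a b _ => a.1.elim0, fun i => i.elim0, fun i => i.elim0⟩⟩
    rw [h, volume_pi, Measure.pi_univ]
    simp [gAux]
  | succ k ih =>
    intro d q u hq hqu
    set m := d (Fin.last k) with hm
    set d' : Fin k → ℕ := fun j => d j.castSucc with hd'
    set L' := (List.ofFn fun j : Fin k => d' j + 1).reverse with hL'
    set C' := ∏ j : Fin k, (Nat.factorial (d' j) : ℝ) with hC'
    set e := blockEquiv d with he
    set Ψ : ((Fin (m + 1) → ℝ) × (((j : Fin k) × Fin (d' j + 1)) → ℝ)) →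
        (((i : Fin (k + 1)) × Fin (d i + 1)) → ℝ) :=
      fun p => (MeasurableEquiv.piCongrLeft (fun _ => ℝ) e)
        ((MeasurableEquiv.sumPiEquivProdPi (fun _ => ℝ)).symm p) with hΨ
    have hmpΨ : MeasurePreserving Ψ volume volume :=
      (volume_measurePreserving_piCongrLeft (fun _ => ℝ) e).comp
        (volume_measurePreserving_sumPiEquivProdPi_symm (fun _ => ℝ))
    have hev1 : ∀ (y : Fin (m + 1) → ℝ) (z : ((j : Fin k) × Fin (d' j + 1)) → ℝ)
        (r : Fin (d (Fin.last k) + 1)), Ψ (y, z) ⟨Fin.last k, r⟩ = y r := by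
      intro y z r
      exact Equiv.piCongrLeft_sumInl
        (fun _ : (i : Fin (k + 1)) × Fin (d i + 1) => ℝ) e y z r
    have hev2 : ∀ (y : Fin (m + 1) → ℝ) (z : ((j : Fin k) × Fin (d' j + 1)) → ℝ)
        (j : Fin k) (r : Fin (d j.castSucc + 1)), Ψ (y, z) ⟨j.castSucc, r⟩ = z ⟨j, r⟩ := by
      intro y z j r
      exact Equiv.piCongrLeft_sumInr
        (fun _ : (i : Fin (k + 1)) × Fin (d i + 1) => ℝ) e y z ⟨j, r⟩
    set Yset : Set (Fin (m + 1) → ℝ) :=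
      {y | (∀ r, 0 ≤ y r) ∧ (∀ r s, r ≤ s → y r ≤ y s) ∧
        q ≤ y (Fin.last m) ∧ y (Fin.last m) ≤ u} with hYdef
    have hYmeas : MeasurableSet Yset := by
      rw [hYdef]
      simp only [Set.setOf_and]
      refine MeasurableSet.inter ?_ (MeasurableSet.inter ?_ (MeasurableSet.inter ?_ ?_))
      · rw [Set.setOf_forall]
        exact .iInter fun r => measurableSet_le measurable_const (measurable_pi_apply r)
      · rw [Set.setOf_forall]
        refine .iInter fun r => ?_
        rw [Set.setOf_forall]
        refine .iInter fun s => ?_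
        by_cases h : r ≤ s
        · simp only [h, forall_true_left]
          exact measurableSet_le (measurable_pi_apply r) (measurable_pi_apply s)
        · simp only [h, false_implies, Set.setOf_true]
          exact .univ
      · exact measurableSet_le measurable_const (measurable_pi_apply _)
      · exact measurableSet_le (measurable_pi_apply _) measurable_const
    have hmem : ∀ (y : Fin (m + 1) → ℝ) (z : ((j : Fin k) × Fin (d' j + 1)) → ℝ),
        Ψ (y, z) ∈ keySet d q u ↔ (y ∈ Yset ∧ z ∈ keySet d' q (y (Fin.last m))) := by
      intro y z
      constructor
      · rintro ⟨h0, hle, hq', hu'⟩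
        refine ⟨⟨fun r => ?_, fun r s hrs => ?_, ?_, ?_⟩,
          fun a => ?_, fun a b hab => ?_, fun j => ?_, fun j => ?_⟩
        · rw [← hev1 y z r]; exact h0 ⟨Fin.last k, r⟩
        · rw [← hev1 y z r, ← hev1 y z s]
          exact hle ⟨Fin.last k, r⟩ ⟨Fin.last k, s⟩ (Or.inl ⟨rfl, hrs⟩)
        · rw [← hev1 y z (Fin.last m)]; exact hq' (Fin.last k)
        · rw [← hev1 y z (Fin.last m)]; exact hu' (Fin.last k)
        · obtain ⟨j, r⟩ := a
          rw [← hev2 y z j r]; exact h0 ⟨j.castSucc, r⟩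
        · obtain ⟨j, r⟩ := a
          obtain ⟨j', r'⟩ := b
          rw [← hev2 y z j r, ← hev2 y z j' r']
          refine hle ⟨j.castSucc, r⟩ ⟨j'.castSucc, r'⟩ ?_
          rcases hab with ⟨hj, hr⟩ | ⟨hj, hr⟩
          · cases hj
            exact Or.inl ⟨rfl, hr⟩
          · exact Or.inr ⟨Fin.castSucc_lt_castSucc_iff.mpr hj, hr⟩
        · rw [← hev2 y z j (Fin.last (d' j))]; exact hq' j.castSucc
        · rw [← hev2 y z j (Fin.last (d' j)), ← hev1 y z (Fin.last m)]
          refine hle ⟨j.castSucc, Fin.last (d' j)⟩ ⟨Fin.last k, Fin.last m⟩ ?_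
          exact Or.inr ⟨Fin.castSucc_lt_last j, by simp [hm]⟩
      · rintro ⟨⟨hy0, hymono, hyq, hyu⟩, hz0, hzle, hzq, hzu⟩
        refine ⟨fun a => ?_, fun a b hab => ?_, fun i => ?_, fun i => ?_⟩
        · obtain ⟨i, r⟩ := a
          induction i using Fin.lastCases with
          | last => rw [hev1]; exact hy0 r
          | cast j => rw [hev2]; exact hz0 ⟨j, r⟩
        · obtain ⟨i, r⟩ := a
          obtain ⟨i', r'⟩ := b
          induction i using Fin.lastCases with
          | last =>
            induction i' using Fin.lastCases with
            | last =>
              rcases hab with ⟨-, h2⟩ | ⟨h1, -⟩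
              · rw [hev1, hev1]; exact hymono r r' h2
              · exact absurd h1 (lt_irrefl _)
            | cast j' =>
              rcases hab with ⟨h1, -⟩ | ⟨h1, -⟩
              · exact absurd h1.symm (Fin.castSucc_lt_last j').ne
              · exact ((Fin.castSucc_lt_last j').asymm h1).elim
          | cast j =>
            induction i' using Fin.lastCases with
            | last =>
              rcases hab with ⟨h1, -⟩ | ⟨-, h2⟩
              · exact absurd h1 (Fin.castSucc_lt_last j).ne
              · have hr' : r' = Fin.last m := by
                  apply Fin.ext
                  simpa using h2
                subst hr'
                rw [hev1, hev2]
                calc z ⟨j, r⟩ ≤ z ⟨j, Fin.last (d' j)⟩ :=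
                      hzle _ _ (Or.inl ⟨rfl, by simpa using Fin.is_le r⟩)
                  _ ≤ y (Fin.last m) := hzu j
            | cast j' =>
              rw [hev2, hev2]
              refine hzle ⟨j, r⟩ ⟨j', r'⟩ ?_
              rcases hab with ⟨h1, h2⟩ | ⟨h1, h2⟩
              · cases Fin.castSucc_inj.mp h1
                exact Or.inl ⟨rfl, h2⟩
              · exact Or.inr ⟨Fin.castSucc_lt_castSucc_iff.mp h1, h2⟩
        · induction i using Fin.lastCases with
          | last => rw [hev1]; exact hyq
          | cast j => rw [hev2]; exact hzq j
        · induction i using Fin.lastCases with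
          | last => rw [hev1]; exact hyu
          | cast j => rw [hev2]; exact (hzu j).trans hyu
    have hKmeas := measurableSet_keySet d q u
    set G : (Fin (m + 1) → ℝ) → ENNReal :=
      Yset.indicator (fun y => ENNReal.ofReal (gAux L' q (y (Fin.last m)) / C')) with hG
    have hGmeas : Measurable G := by
      refine Measurable.indicator ?_ hYmeas
      exact (((gAux_continuous L' q).measurable.comp
        (measurable_pi_apply (Fin.last m))).div_const C').ennreal_ofReal
    set Φ := MeasurableEquiv.piFinSuccAbove (fun _ : Fin (m + 1) => ℝ) (Fin.last m) with hΦ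
    have hmpΦ : MeasurePreserving Φ.symm volume volume :=
      (volume_preserving_piFinSuccAbove (fun _ : Fin (m + 1) => ℝ) (Fin.last m)).symm
    have hC'pos : 0 < C' := Finset.prod_pos fun j _ => by positivity
    have hfactpos : (0:ℝ) < m.factorial := by positivity
    have hYmem : ∀ (s : ℝ) (zz : Fin m → ℝ),
        Φ.symm (s, zz) ∈ Yset ↔ (s ∈ Set.Icc q u ∧ zz ∈ simplexSet m s) := by
      intro s zz
      constructor
      · rintro ⟨h0, hmono, hq', hu'⟩
        rw [hΦ, insert_last_eval_last] at hq' hu'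
        refine ⟨⟨hq', hu'⟩, fun r => ⟨?_, ?_⟩, fun r r' hrr => ?_⟩
        · have := h0 r.castSucc; rwa [hΦ, insert_last_eval_castSucc] at this
        · have := hmono r.castSucc (Fin.last m) (Fin.le_last _)
          rwa [hΦ, insert_last_eval_castSucc, insert_last_eval_last] at this
        · have := hmono r.castSucc r'.castSucc (by simpa using hrr)
          rwa [hΦ, insert_last_eval_castSucc, insert_last_eval_castSucc] at this
      · rintro ⟨⟨hq', hu'⟩, hz1, hz2⟩
        refine ⟨fun r => ?_, fun r r' hrr => ?_, ?_, ?_⟩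
        · induction r using Fin.lastCases with
          | last => rw [hΦ, insert_last_eval_last]; exact hq.trans hq'
          | cast j => rw [hΦ, insert_last_eval_castSucc]; exact (hz1 j).1
        · induction r using Fin.lastCases with
          | last =>
            have h' : r' = Fin.last m := le_antisymm (Fin.le_last r') hrr
            subst h'
            exact le_refl _
          | cast j =>
            induction r' using Fin.lastCases with
            | last =>
              rw [hΦ, insert_last_eval_castSucc, insert_last_eval_last]
              exact (hz1 j).2
            | cast j' =>
              rw [hΦ, insert_last_eval_castSucc, insert_last_eval_castSucc]
              exact hz2 j j' (by simpa using hrr)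
        · rw [hΦ, insert_last_eval_last]; exact hq'
        · rw [hΦ, insert_last_eval_last]; exact hu'
    calc volume (keySet d q u)
        = volume (Ψ ⁻¹' keySet d q u) :=
          (hmpΨ.measure_preimage hKmeas.nullMeasurableSet).symm
      _ = ∫⁻ y, volume (Prod.mk y ⁻¹' (Ψ ⁻¹' keySet d q u)) := by
          rw [Measure.volume_eq_prod]
          exact Measure.prod_apply (hmpΨ.measurable hKmeas)
      _ = ∫⁻ y, G y := by
          refine lintegral_congr fun y => ?_
          by_cases hy : y ∈ Yset
          · have hpre : Prod.mk y ⁻¹' (Ψ ⁻¹' keySet d q u) = keySet d' q (y (Fin.last m)) := by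
              ext z
              simp only [Set.mem_preimage]
              rw [hmem y z]
              exact and_iff_right hy
            rw [hpre, ih d' q (y (Fin.last m)) hq hy.2.2.1, hG, Set.indicator_of_mem hy]
          · have hpre : Prod.mk y ⁻¹' (Ψ ⁻¹' keySet d q u) = ∅ := by
              ext z
              simp only [Set.mem_preimage, Set.mem_empty_iff_false, iff_false]
              intro hzz
              exact hy ((hmem y z).mp hzz).1
            rw [hpre, hG, Set.indicator_of_notMem hy, measure_empty]
      _ = ∫⁻ p : ℝ × (Fin m → ℝ), G (Φ.symm p) :=
          (hmpΦ.lintegral_comp hGmeas).symm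
      _ = ∫⁻ s : ℝ, ∫⁻ zz : Fin m → ℝ, G (Φ.symm (s, zz)) := by
          rw [Measure.volume_eq_prod]
          exact lintegral_prod _ ((hGmeas.comp Φ.symm.measurable).aemeasurable)
      _ = ∫⁻ s : ℝ, (Set.Icc q u).indicator (fun s =>
            ENNReal.ofReal (gAux L' q s / C') * ENNReal.ofReal (s ^ m / m.factorial)) s := by
          refine lintegral_congr fun s => ?_
          by_cases hs : s ∈ Set.Icc q u
          · have hG2 : ∀ zz, G (Φ.symm (s, zz)) =
                (simplexSet m s).indicator (fun _ => ENNReal.ofReal (gAux L' q s / C')) zz := by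
              intro zz
              rw [hG]
              by_cases hzz : zz ∈ simplexSet m s
              · rw [Set.indicator_of_mem ((hYmem s zz).mpr ⟨hs, hzz⟩), Set.indicator_of_mem hzz,
                  hΦ, insert_last_eval_last]
              · rw [Set.indicator_of_notMem, Set.indicator_of_notMem hzz]
                intro hmem'
                exact hzz ((hYmem s zz).mp hmem').2
            rw [Set.indicator_of_mem hs]
            simp_rw [hG2]
            rw [lintegral_indicator_const (measurableSet_simplexSet m s),
              volume_simplexSet m s (hq.trans hs.1)]
          · rw [Set.indicator_of_notMem hs]
            have hG2 : ∀ zz, G (Φ.symm (s, zz)) = 0 := by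
              intro zz
              rw [hG, Set.indicator_of_notMem]
              intro hmem'
              exact hs ((hYmem s zz).mp hmem').1
            simp_rw [hG2]
            exact lintegral_zero
      _ = ∫⁻ s in Set.Icc q u,
            ENNReal.ofReal (gAux L' q s / C') * ENNReal.ofReal (s ^ m / m.factorial) := by
          rw [lintegral_indicator measurableSet_Icc]
      _ = ∫⁻ s in Set.Icc q u,
            ENNReal.ofReal (gAux L' q s / C' * (s ^ m / m.factorial)) := by
          refine setLIntegral_congr_fun_ae measurableSet_Icc ?_
          filter_upwards with s hs
          rw [ENNReal.ofReal_mul (div_nonneg (gAux_nonneg L' q s hq hs.1) hC'pos.le)]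
      _ = ENNReal.ofReal (∫ s in q..u, gAux L' q s / C' * (s ^ m / m.factorial)) := by
          refine lintegral_Icc_ofReal hqu ?_ fun s hs => ?_
          · exact ((gAux_continuous L' q).div_const _).mul ((continuous_pow m).div_const _)
          · exact mul_nonneg (div_nonneg (gAux_nonneg L' q s hq hs.1) hC'pos.le)
              (div_nonneg (pow_nonneg (hq.trans hs.1) m) (Nat.cast_nonneg _))
      _ = ENNReal.ofReal (gAux (List.ofFn fun i => d i + 1).reverse q u /
            ∏ i, (Nat.factorial (d i) : ℝ)) := by
          congr 1
          have hrev : (List.ofFn fun i : Fin (k + 1) => d i + 1).reverse = (m + 1) :: L' := by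
            rw [List.ofFn_succ', List.concat_eq_append, List.reverse_append]
            simp [hL', hd', hm]
          rw [hrev]
          have hprod : (∏ i : Fin (k + 1), (Nat.factorial (d i) : ℝ)) = C' * m.factorial := by
            rw [hC', Fin.prod_univ_castSucc]
          rw [hprod]
          have hcons : gAux ((m + 1) :: L') q u = ∫ t in q..u, t ^ m * gAux L' q t := by
            simp [gAux]
          rw [hcons, ← intervalIntegral.integral_div]
          refine intervalIntegral.integral_congr fun t ht => ?_
          have h1 : C' ≠ 0 := hC'pos.ne'
          have h2 : (m.factorial : ℝ) ≠ 0 := hfactpos.ne'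
          field_simp

/-- Theorem: for the composition `c = (d 1 + 1, …, d k + 1)` of size
`n = Σ (d i + 1)`, the slice of the order polytope of `P_c` at `x_{p_0} = q`
(described in the coordinates indexed by `P_c ∖ {p_0}`: the cube constraints,
the order constraints among elements other than `p_0`, and the constraints
`q ≤ x_{p_i}` coming from `p_0 ≤ p_i`) has `n`-dimensional Lebesgue measure
`g_c(q) / ((c_1 − 1)! ⋯ (c_k − 1)!)`. -/
theorem order_polytope_slice_volume {k : ℕ} (d : Fin k → ℕ) (q : ℝ)
    (hq0 : 0 ≤ q) (hq1 : q ≤ 1) :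
    volume {x : ((i : Fin k) × Fin (d i + 1)) → ℝ |
        (∀ a, 0 ≤ x a ∧ x a ≤ 1) ∧
        (∀ a b, posetLe d a b → x a ≤ x b) ∧
        (∀ i : Fin k, q ≤ x ⟨i, Fin.last (d i)⟩)} =
      ENNReal.ofReal
        (gcomp (List.ofFn fun i => d i + 1) q / ∏ i, (Nat.factorial (d i) : ℝ)) := by
  have hset : {x : ((i : Fin k) × Fin (d i + 1)) → ℝ |
        (∀ a, 0 ≤ x a ∧ x a ≤ 1) ∧
        (∀ a b, posetLe d a b → x a ≤ x b) ∧
        (∀ i : Fin k, q ≤ x ⟨i, Fin.last (d i)⟩)} = keySet d q 1 := by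
    ext x
    constructor
    · rintro ⟨h1, h2, h3⟩
      exact ⟨fun a => (h1 a).1, h2, h3, fun i => (h1 ⟨i, Fin.last (d i)⟩).2⟩
    · rintro ⟨h1, h2, h3, h4⟩
      refine ⟨fun a => ⟨h1 a, ?_⟩, h2, h3⟩
      calc x a ≤ x ⟨a.1, Fin.last (d a.1)⟩ :=
            h2 a ⟨a.1, Fin.last (d a.1)⟩ (Or.inl ⟨rfl, by simpa using Fin.is_le a.2⟩)
        _ ≤ 1 := h4 a.1
  rw [hset, volume_keySet k d q 1 hq0 hq1]
  rfl
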